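/- Let (S, 𝓕) be a measurable space, let Q be a probability measure on it, let α > 1, and let g : S → ℝ be bounded and measurable. Then (1/α)·log ∫ e^{α g} dQ = sup over all probability measures P на (S,𝓕) of [ (1/(α−1))·log ∫ e^{(α−1) g} dP − R_α(P‖Q) ], where the supremum is taken over all probability measures P on (S, 𝓕). -/

import Mathlib

open MeasureTheory Classical

section Helpers
variable {S : Type*} [MeasurableSpace S]

lemma aux_mexp (c : ℝ) {g : S → ℝ} (hg : Measurable g) :
    Measurable (fun x => ENNReal.ofReal (Real.exp (c * g x))) :=
  ((measurable_const.mul hg).exp).ennreal_ofReal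

lemma aux_lint_pos (μ : Measure S) [IsProbabilityMeasure μ] (c : ℝ) {g : S → ℝ} {M : ℝ}
    (hM : ∀ x, |g x| ≤ M) :
    0 < ∫⁻ x, ENNReal.ofReal (Real.exp (c * g x)) ∂μ := by
  have hle : ENNReal.ofReal (Real.exp (-(|c| * M))) ≤ ∫⁻ x, ENNReal.ofReal (Real.exp (c * g x)) ∂μ := by
    calc ENNReal.ofReal (Real.exp (-(|c| * M)))
        = ∫⁻ _, ENNReal.ofReal (Real.exp (-(|c| * M))) ∂μ := by simp
      _ ≤ ∫⁻ x, ENNReal.ofReal (Real.exp (c * g x)) ∂μ := by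
          refine lintegral_mono fun x => ENNReal.ofReal_le_ofReal (Real.exp_le_exp.2 ?_)
          have h1 : |c * g x| ≤ |c| * M := by
            rw [abs_mul]; exact mul_le_mul_of_nonneg_left (hM x) (abs_nonneg c)
          have := neg_abs_le (c * g x)
          linarith
  exact lt_of_lt_of_le (ENNReal.ofReal_pos.2 (Real.exp_pos _)) hle

lemma aux_lint_lt_top (μ : Measure S) [IsProbabilityMeasure μ] (c : ℝ) {g : S → ℝ} {M : ℝ}
    (hM : ∀ x, |g x| ≤ M) :
    ∫⁻ x, ENNReal.ofReal (Real.exp (c * g x)) ∂μ < ⊤ := by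
  have hle : ∫⁻ x, ENNReal.ofReal (Real.exp (c * g x)) ∂μ ≤ ENNReal.ofReal (Real.exp (|c| * M)) := by
    calc ∫⁻ x, ENNReal.ofReal (Real.exp (c * g x)) ∂μ
        ≤ ∫⁻ _, ENNReal.ofReal (Real.exp (|c| * M)) ∂μ := by
          refine lintegral_mono fun x => ENNReal.ofReal_le_ofReal (Real.exp_le_exp.2 ?_)
          have h1 : |c * g x| ≤ |c| * M := by
            rw [abs_mul]; exact mul_le_mul_of_nonneg_left (hM x) (abs_nonneg c)
          exact le_trans (le_abs_self _) h1
      _ = ENNReal.ofReal (Real.exp (|c| * M)) := by simp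
  exact lt_of_le_of_lt hle ENNReal.ofReal_lt_top

lemma aux_int_eq (μ : Measure S) (c : ℝ) {g : S → ℝ} (hg : Measurable g) :
    ∫ x, Real.exp (c * g x) ∂μ = (∫⁻ x, ENNReal.ofReal (Real.exp (c * g x)) ∂μ).toReal :=
  integral_eq_lintegral_of_nonneg_ae (Filter.Eventually.of_forall fun x => (Real.exp_pos _).le)
    ((measurable_const.mul hg).exp).aestronglyMeasurable

lemma aux_real_ineq (α a z i : ℝ) (hα : 1 < α) (h : a ≤ (α - 1) / α * z + α⁻¹ * i) :
    (α - 1)⁻¹ * a - (α * (α - 1))⁻¹ * i ≤ α⁻¹ * z := by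
  have h1 : 0 < α - 1 := by linarith
  have h2 : 0 < α := by linarith
  have h3 := mul_le_mul_of_nonneg_left h (inv_pos.2 h1).le
  have e : (α - 1)⁻¹ * ((α - 1) / α * z + α⁻¹ * i) = α⁻¹ * z + (α * (α - 1))⁻¹ * i := by
    field_simp
  linarith [e ▸ h3]

end Helpers

/-- The Rényi divergence of degree `α` of `Q` with respect to `P`:
`R_α(Q‖P) = (1/(α(α−1)))·log ∫ (dQ/dP)^α dP` if `Q ≪ P`, and `+∞` otherwise. -/
noncomputable def renyiDiv {S : Type*} [MeasurableSpace S] (α : ℝ)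
    (Q P : Measure S) : EReal :=
  if Q ≪ P then
    (((α * (α - 1))⁻¹ : ℝ) : EReal) * ENNReal.log (∫⁻ x, Q.rnDeriv P x ^ α ∂P)
  else ⊤

/-- Variational formula: for a probability measure `Q`, `α > 1` and bounded measurable `g`,
`(1/α)·log ∫ e^{αg} dQ = sup_P [ (1/(α−1))·log ∫ e^{(α−1)g} dP − R_α(P‖Q) ]`,
the supremum being over all probability measures `P`. -/
theorem renyi_variational_formula {S : Type*} [MeasurableSpace S]
    (Q : Measure S) [IsProbabilityMeasure Q] (α : ℝ) (hα : 1 < α)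
    (g : S → ℝ) (hg : Measurable g) (hbd : ∃ M : ℝ, ∀ x, |g x| ≤ M) :
    ((α⁻¹ * Real.log (∫ x, Real.exp (α * g x) ∂Q) : ℝ) : EReal) =
      ⨆ P : {P : Measure S // IsProbabilityMeasure P},
        (((α - 1)⁻¹ * Real.log (∫ x, Real.exp ((α - 1) * g x) ∂(P : Measure S)) : ℝ) : EReal)
          - renyiDiv α (P : Measure S) Q := by
  obtain ⟨M, hM⟩ := hbd
  have hα0 : (0:ℝ) < α := by linarith
  have hα1 : (0:ℝ) < α - 1 := by linarith
  set Zα := ∫⁻ x, ENNReal.ofReal (Real.exp (α * g x)) ∂Q with hZα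
  have hZα_pos : 0 < Zα := aux_lint_pos Q α hM
  have hZα_top : Zα ≠ ⊤ := (aux_lint_lt_top Q α hM).ne
  have hZα'_pos : 0 < Zα.toReal := ENNReal.toReal_pos hZα_pos.ne' hZα_top
  have hIntQ : ∫ x, Real.exp (α * g x) ∂Q = Zα.toReal := aux_int_eq Q α hg
  rw [hIntQ]
  apply le_antisymm
  · -- LHS ≤ sup : use the tilted measure P* = Q.withDensity (e^g / Z1)
    set Z1 := ∫⁻ x, ENNReal.ofReal (Real.exp (1 * g x)) ∂Q with hZ1
    have hZ1_pos : 0 < Z1 := aux_lint_pos Q 1 hM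
    have hZ1_top : Z1 ≠ ⊤ := (aux_lint_lt_top Q 1 hM).ne
    have hZ1'_pos : 0 < Z1.toReal := ENNReal.toReal_pos hZ1_pos.ne' hZ1_top
    set D : S → ENNReal := fun x => ENNReal.ofReal (Real.exp (1 * g x)) / Z1 with hD
    have hDm : Measurable D := (aux_mexp 1 hg).div_const _
    have hPstar : IsProbabilityMeasure (Q.withDensity D) := by
      constructor
      rw [withDensity_apply _ MeasurableSet.univ, Measure.restrict_univ]
      simp_rw [hD, div_eq_mul_inv]
      rw [lintegral_mul_const _ (aux_mexp 1 hg), ← hZ1, ← div_eq_mul_inv,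
        ENNReal.div_self hZ1_pos.ne' hZ1_top]
    refine le_iSup_of_le ⟨Q.withDensity D, hPstar⟩ ?_
    show ((α⁻¹ * Real.log Zα.toReal : ℝ) : EReal) ≤
      (((α - 1)⁻¹ * Real.log (∫ x, Real.exp ((α - 1) * g x) ∂(Q.withDensity D)) : ℝ) : EReal)
        - renyiDiv α (Q.withDensity D) Q
    -- compute the exponential integral under P*
    have e1 : ∫⁻ x, ENNReal.ofReal (Real.exp ((α - 1) * g x)) ∂(Q.withDensity D) = Zα / Z1 := by
      rw [lintegral_withDensity_eq_lintegral_mul _ hDm (aux_mexp (α - 1) hg)]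
      have hpt : ∀ x, (D * fun x => ENNReal.ofReal (Real.exp ((α - 1) * g x))) x
          = ENNReal.ofReal (Real.exp (α * g x)) * Z1⁻¹ := by
        intro x
        simp only [hD, Pi.mul_apply, div_eq_mul_inv]
        rw [mul_right_comm, ← ENNReal.ofReal_mul (Real.exp_pos _).le, ← Real.exp_add]
        ring_nf
      rw [lintegral_congr hpt, lintegral_mul_const _ (aux_mexp α hg), ← hZα,
        ← div_eq_mul_inv]
    have intPstar : ∫ x, Real.exp ((α - 1) * g x) ∂(Q.withDensity D) = (Zα / Z1).toReal := by
      rw [aux_int_eq _ (α - 1) hg, e1]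
    -- compute the Rényi divergence at P*
    have hrn : ∫⁻ x, (Q.withDensity D).rnDeriv Q x ^ α ∂Q = Zα / Z1 ^ α := by
      have hae := Measure.rnDeriv_withDensity Q hDm
      rw [lintegral_congr_ae ((hae.mono fun x hx => by dsimp only; rw [hx]) :
        (fun x => (Q.withDensity D).rnDeriv Q x ^ α) =ᵐ[Q] fun x => D x ^ α)]
      have hpt : ∀ x, D x ^ α = ENNReal.ofReal (Real.exp (α * g x)) * (Z1 ^ α)⁻¹ := by
        intro x
        rw [hD]
        simp only []
        rw [ENNReal.div_rpow_of_nonneg _ _ hα0.le, ENNReal.ofReal_rpow_of_pos (Real.exp_pos _),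
          ← Real.exp_mul, div_eq_mul_inv]
        ring_nf
      rw [lintegral_congr hpt, lintegral_mul_const _ (aux_mexp α hg), ← hZα, ← div_eq_mul_inv]
    have hZ1α_pos : 0 < Z1 ^ α := ENNReal.rpow_pos hZ1_pos hZ1_top
    have hZ1α_top : Z1 ^ α ≠ ⊤ := (ENNReal.rpow_lt_top_of_nonneg hα0.le hZ1_top).ne
    have hdiv_pos : 0 < (Zα / Z1 ^ α).toReal :=
      ENNReal.toReal_pos (ENNReal.div_pos hZα_pos.ne' hZ1α_top).ne'
        (ENNReal.div_lt_top hZα_top hZ1α_pos.ne').ne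
    rw [renyiDiv, if_pos (withDensity_absolutelyContinuous Q D), hrn,
      ENNReal.log_pos_real' hdiv_pos, intPstar]
    rw [← EReal.coe_mul, ← EReal.coe_sub, EReal.coe_le_coe_iff]
    have hZ1αtR : (Z1 ^ α).toReal = Z1.toReal ^ α := (ENNReal.toReal_rpow _ _).symm ▸ rfl
    rw [ENNReal.toReal_div, ENNReal.toReal_div, ← ENNReal.toReal_rpow,
      Real.log_div hZα'_pos.ne' hZ1'_pos.ne',
      Real.log_div hZα'_pos.ne' (Real.rpow_pos_of_pos hZ1'_pos α).ne',
      Real.log_rpow hZ1'_pos]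
    apply le_of_eq
    field_simp
    ring
  · -- sup ≤ LHS
    apply iSup_le
    rintro ⟨P, hP⟩
    haveI := hP
    show (((α - 1)⁻¹ * Real.log (∫ x, Real.exp ((α - 1) * g x) ∂P) : ℝ) : EReal)
      - renyiDiv α P Q ≤ ((α⁻¹ * Real.log Zα.toReal : ℝ) : EReal)
    by_cases hPQ : P ≪ Q
    swap
    · rw [renyiDiv, if_neg hPQ]
      rw [sub_eq_add_neg]
      simp
    set f := P.rnDeriv Q with hf
    have hfm : Measurable f := Measure.measurable_rnDeriv P Q
    set I := ∫⁻ x, f x ^ α ∂Q with hI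
    have hI0 : I ≠ 0 := by
      intro h0
      have hf0 : (fun x => f x ^ α) =ᵐ[Q] 0 := (lintegral_eq_zero_iff (hfm.pow_const α)).1 h0
      have hf0' : f =ᵐ[Q] 0 := by
        filter_upwards [hf0] with x hx
        rcases (ENNReal.rpow_eq_zero_iff.1 hx) with ⟨h1, _⟩ | ⟨_, h2⟩
        · exact h1
        · linarith
      have h1 : P Set.univ = 0 := by
        rw [← Measure.lintegral_rnDeriv hPQ]
        calc ∫⁻ x, P.rnDeriv Q x ∂Q = ∫⁻ _x, 0 ∂Q :=
              lintegral_congr_ae (hf0'.mono fun x hx => hx)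
          _ = 0 := lintegral_zero
      simp [measure_univ] at h1
    by_cases hItop : I = ⊤
    · rw [renyiDiv, if_pos hPQ, ← hf, ← hI, hItop, ENNReal.log_top,
        EReal.coe_mul_top_of_pos (by positivity), sub_eq_add_neg]
      simp
    -- main Hölder case
    have hI'_pos : 0 < I.toReal := ENNReal.toReal_pos hI0 hItop
    set A := ∫⁻ x, ENNReal.ofReal (Real.exp ((α - 1) * g x)) ∂P with hA
    have hA_pos : 0 < A := aux_lint_pos P (α - 1) hM
    have hA_top : A ≠ ⊤ := (aux_lint_lt_top P (α - 1) hM).ne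
    have hA'_pos : 0 < A.toReal := ENNReal.toReal_pos hA_pos.ne' hA_top
    have intP : ∫ x, Real.exp ((α - 1) * g x) ∂P = A.toReal := aux_int_eq P (α - 1) hg
    have hconj : Real.HolderConjugate (α / (α - 1)) α := by
      rw [Real.holderConjugate_iff]; constructor
      · rw [lt_div_iff₀ hα1]; linarith
      · field_simp; ring
    have hHolder := ENNReal.lintegral_mul_le_Lp_mul_Lq Q hconj
      (aux_mexp (α - 1) hg).aemeasurable hfm.aemeasurable
    have hmulEq : ∫⁻ a, ((fun x => ENNReal.ofReal (Real.exp ((α - 1) * g x))) * f) a ∂Q = A := by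
      rw [hA, ← lintegral_rnDeriv_mul hPQ (aux_mexp (α - 1) hg).aemeasurable]
      exact lintegral_congr fun x => by simp [mul_comm, hf]
    have hfst : ∫⁻ a, ENNReal.ofReal (Real.exp ((α - 1) * g a)) ^ (α / (α - 1)) ∂Q = Zα := by
      rw [hZα]
      refine lintegral_congr fun x => ?_
      rw [ENNReal.ofReal_rpow_of_pos (Real.exp_pos _), ← Real.exp_mul]
      congr 1
      field_simp
    rw [hmulEq, hfst, one_div_div] at hHolder
    have hRfin : Zα ^ ((α - 1) / α) * I ^ (1 / α) ≠ ⊤ :=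
      (ENNReal.mul_lt_top (ENNReal.rpow_lt_top_of_nonneg (by positivity) hZα_top)
        (ENNReal.rpow_lt_top_of_nonneg (by positivity) hItop)).ne
    have htr := ENNReal.toReal_mono hRfin hHolder
    rw [ENNReal.toReal_mul, ← ENNReal.toReal_rpow, ← ENNReal.toReal_rpow] at htr
    have hlog := Real.log_le_log hA'_pos htr
    rw [Real.log_mul (Real.rpow_pos_of_pos hZα'_pos _).ne' (Real.rpow_pos_of_pos hI'_pos _).ne',
      Real.log_rpow hZα'_pos, Real.log_rpow hI'_pos, one_div] at hlog
    have key := aux_real_ineq α (Real.log A.toReal) (Real.log Zα.toReal) (Real.log I.toReal) hα hlog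
    rw [renyiDiv, if_pos hPQ, ← hf, ← hI, ENNReal.log_pos_real' hI'_pos, intP,
      ← EReal.coe_mul, ← EReal.coe_sub, EReal.coe_le_coe_iff]
    exact key
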